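/- Let Ψ be an explosive branching mechanism with lim_{u→∞} Ψ(u) = −∞. Then for each fixed λ > 0, u(t,λ) − a_t → ∞ as t → ∞, where a_t = u(t,0+). -/

import Mathlib

open Set MeasureTheory Filter

theorem conditional_limit_infinite_case (Ψ Φ : ℝ → ℝ) (u : ℝ → ℝ → ℝ)
    (hcont : ContinuousOn Ψ (Set.Ioi (0:ℝ)))
    (hneg : ∀ x > (0:ℝ), Ψ x < 0)
    (hconv : ConvexOn ℝ (Set.Ioi (0:ℝ)) Ψ)
    (hanti : AntitoneOn Ψ (Set.Ioi (0:ℝ)))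
    (hint : IntegrableOn (fun x => 1 / (-Ψ x)) (Set.Ioc (0:ℝ) 1))
    (hΦ : ∀ l : ℝ, 0 ≤ l → Φ l = ∫ x in Set.Ioc (0:ℝ) l, 1 / (-Ψ x))
    (hΦpos : ∀ l > (0:ℝ), 0 < Φ l)
    (hode : ∀ l ≥ (0:ℝ), ∀ t ≥ (0:ℝ), HasDerivAt (fun s => u s l) (-Ψ (u t l)) t)
    (hinit : ∀ l > (0:ℝ), u 0 l = l)
    (hlimΨ : Tendsto Ψ atTop atBot)
    (ha : Tendsto (fun t => u t 0) atTop atTop)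
    (hu : ∀ l > (0:ℝ), Tendsto (fun t => u t l) atTop atTop)
    (hPhiId : ∀ l > (0:ℝ), ∀ t ≥ (0:ℝ),
      ∫ x in Set.Ioc (u t 0) (u t l), 1 / (-Ψ x) = Φ l) :
    ∀ l > (0:ℝ), Tendsto (fun t => u t l - u t 0) atTop atTop := by
  intro l hl
  have hΦl := hΦpos l hl
  -- lower bound: eventually Φ l * (-Ψ (u t 0)) ≤ u t l - u t 0
  have hbound : ∀ᶠ t in atTop, Φ l * (-Ψ (u t 0)) ≤ u t l - u t 0 := by
    filter_upwards [ha.eventually_gt_atTop 0, eventually_ge_atTop (0:ℝ)]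
      with t hat ht
    set a := u t 0 with ha'
    set b := u t l with hb'
    have hΨa : Ψ a < 0 := hneg a hat
    have hΨa' : 0 < -Ψ a := by linarith
    have hPhi : ∫ x in Set.Ioc a b, 1 / (-Ψ x) = Φ l := hPhiId l hl t ht
    have hab : a < b := by
      by_contra h
      push_neg at h
      rw [Set.Ioc_eq_empty (not_lt.mpr h)] at hPhi
      simp at hPhi
      linarith
    have hIntf : IntegrableOn (fun x => 1 / (-Ψ x)) (Set.Ioc a b) := by
      by_contra h
      rw [MeasureTheory.integral_undef h] at hPhi
      linarith
    have hmono : ∀ x ∈ Set.Ioc a b, 1 / (-Ψ x) ≤ 1 / (-Ψ a) := by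
      intro x hx
      have hx0 : 0 < x := lt_trans hat hx.1
      have := hanti (Set.mem_Ioi.mpr hat) (Set.mem_Ioi.mpr hx0) hx.1.le
      exact one_div_le_one_div_of_le hΨa' (by linarith)
    have hcst : IntegrableOn (fun _ : ℝ => 1 / (-Ψ a)) (Set.Ioc a b) := by
      apply (integrableOn_const_iff enorm_ne_top).mpr
      right
      rw [Real.volume_Ioc]
      exact ENNReal.ofReal_lt_top
    have hle : ∫ x in Set.Ioc a b, 1 / (-Ψ x) ≤
        ∫ _x in Set.Ioc a b, 1 / (-Ψ a) :=
      MeasureTheory.setIntegral_mono_on hIntf hcst measurableSet_Ioc hmono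
    rw [hPhi, MeasureTheory.setIntegral_const, Real.volume_real_Ioc_of_le hab.le,
      smul_eq_mul] at hle
    have : Φ l ≤ (b - a) / (-Ψ a) := by
      rw [div_eq_mul_one_div]; exact hle
    calc Φ l * (-Ψ a) ≤ ((b - a) / (-Ψ a)) * (-Ψ a) := by
          exact mul_le_mul_of_nonneg_right this hΨa'.le
      _ = b - a := div_mul_cancel₀ _ (ne_of_gt hΨa')
  -- the lower bound tends to infinity
  have hlim : Tendsto (fun t => Φ l * (-Ψ (u t 0))) atTop atTop := by
    have h1 : Tendsto (fun t => Ψ (u t 0)) atTop atBot := hlimΨ.comp ha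
    have h2 : Tendsto (fun t => -Ψ (u t 0)) atTop atTop := tendsto_neg_atBot_atTop.comp h1
    exact h2.const_mul_atTop hΦl
  exact tendsto_atTop_mono' atTop hbound hlim
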